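/- Let (A_m)_{m≥0} be a formal orbit portrait of valence N ≥ 2 with degrees (d_m)_{m≥1}, let m ≥ 0, and suppose A_m has exactly one critical complementary arc I = (a,b), of length ℓ. Then ℓ > 1 − 1/d_{m+1}; for every y ∈ ℝ/ℤ not in A_{m+1}, the number of x ∈ I with d_{m+1}·x = y equals d_{m+1} if y lies in the open arc (d_{m+1}·a, d_{m+1}·b), and equals d_{m+1} − 1 otherwise. -/

import Mathlib

/-- The unique representative in `[0,1)` of `b - a`; for `a ≠ b` this is the
unique representative of `b − a` in `(0,1)`, the length `ℓ(a,b)` of the arc from `a` to `b`. -/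
noncomputable def arcLen (a b : UnitAddCircle) : ℝ :=
  ((AddCircle.equivIco 1 0) (b - a) : ℝ)

/-- The open arc `(a,b) = {a + t : 0 < t < ℓ(a,b)}` in `ℝ/ℤ`. -/
def openArc (a b : UnitAddCircle) : Set UnitAddCircle :=
  {x | ∃ t : ℝ, 0 < t ∧ t < arcLen a b ∧ x = a + (t : UnitAddCircle)}

/-- `(a,b,c)` is in positive cyclic order: `ℓ(a,b) < ℓ(a,c)`. -/
def PosCyclic (a b c : UnitAddCircle) : Prop := arcLen a b < arcLen a c

/-- A formal orbit portrait of valence `N` with degrees `d`: a sequence of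
`N`-element subsets `A m` of `ℝ/ℤ` such that `θ ↦ d_{m+1}·θ` maps `A m`
bijectively onto `A (m+1)` and carries every triple of pairwise distinct points
of `A m` in positive cyclic order to a triple in positive cyclic order. -/
def IsFormalPortrait (N : ℕ) (d : ℕ → ℕ) (A : ℕ → Set UnitAddCircle) : Prop :=
  ∀ m : ℕ,
    (A m).Finite ∧ (A m).ncard = N ∧
    Set.BijOn (fun θ => d (m + 1) • θ) (A m) (A (m + 1)) ∧
    ∀ a ∈ A m, ∀ b ∈ A m, ∀ c ∈ A m, a ≠ b → a ≠ c → b ≠ c →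
      PosCyclic a b c →
        PosCyclic (d (m + 1) • a) (d (m + 1) • b) (d (m + 1) • c)

/-- `(a,b)` is a complementary arc of `A`: `a, b ∈ A`, `a ≠ b`, and the open
arc `(a,b)` contains no point of `A`. -/
def IsComplArc (A : Set UnitAddCircle) (a b : UnitAddCircle) : Prop :=
  a ≠ b ∧ a ∈ A ∧ b ∈ A ∧ openArc a b ∩ A = ∅

noncomputable def L (x : UnitAddCircle) : ℝ := ((AddCircle.equivIco 1 0) x : ℝ)

lemma L_coe (x : ℝ) : L (x : UnitAddCircle) = Int.fract x := by
  have := AddCircle.coe_equivIco_mk_apply (p := (1:ℝ)) x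
  simpa [L] using this

lemma coe_L (x : UnitAddCircle) : ((L x : ℝ) : UnitAddCircle) = x := by
  have := (AddCircle.equivIco 1 0).symm_apply_apply x
  rw [AddCircle.equivIco, QuotientAddGroup.equivIcoMod_symm_apply] at this
  exact this

lemma L_mem (x : UnitAddCircle) : L x ∈ Set.Ico (0:ℝ) 1 := by
  have := ((AddCircle.equivIco 1 0) x).2
  simpa [L] using this

lemma sub_coe (x y : ℝ) : ((x : UnitAddCircle) - (y : UnitAddCircle)) = ((x - y : ℝ) : UnitAddCircle) := by
  norm_cast

lemma arcLen_eq (a b : UnitAddCircle) : arcLen a b = Int.fract (L b - L a) := by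
  conv_lhs => rw [arcLen, ← coe_L a, ← coe_L b, sub_coe]
  exact L_coe _

lemma arcLen_nonneg (a b : UnitAddCircle) : 0 ≤ arcLen a b := by
  rw [arcLen_eq]; exact Int.fract_nonneg _

lemma arcLen_lt_one (a b : UnitAddCircle) : arcLen a b < 1 := by
  rw [arcLen_eq]; exact Int.fract_lt_one _

lemma L_inj {a b : UnitAddCircle} (h : L a = L b) : a = b := by
  rw [← coe_L a, ← coe_L b, h]

lemma arcLen_eq_zero_iff {a b : UnitAddCircle} : arcLen a b = 0 ↔ a = b := by
  rw [arcLen_eq]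
  constructor
  · intro h
    have h1 := L_mem a; have h2 := L_mem b
    simp only [Set.mem_Ico] at h1 h2
    rcases le_or_gt (L a) (L b) with hc | hc
    · have hf : Int.fract (L b - L a) = L b - L a :=
        Int.fract_eq_self.mpr ⟨by linarith, by linarith⟩
      rw [hf] at h
      exact (L_inj (by linarith)).symm
    · exfalso
      have h1' : Int.fract (L b - L a + 1) = L b - L a + 1 :=
        Int.fract_eq_self.mpr ⟨by linarith, by linarith⟩
      have h2' : Int.fract (L b - L a + 1) = Int.fract (L b - L a) := by
        rw [Int.fract_add_one]
      rw [h2', h] at h1'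
      linarith
  · intro h; subst h; simp

lemma arcLen_pos_iff {a b : UnitAddCircle} : 0 < arcLen a b ↔ a ≠ b := by
  constructor
  · intro h he; subst he; rw [arcLen_eq_zero_iff.mpr rfl] at h; exact lt_irrefl _ h
  · intro h
    rcases lt_or_eq_of_le (arcLen_nonneg a b) with h' | h'
    · exact h'
    · exact absurd (arcLen_eq_zero_iff.mp h'.symm) h

lemma arcLen_add_coe (a : UnitAddCircle) (t : ℝ) :
    arcLen a (a + (t : UnitAddCircle)) = Int.fract t := by
  rw [arcLen]
  rw [add_sub_cancel_left]
  exact L_coe t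

lemma eq_add_arcLen (a x : UnitAddCircle) : x = a + ((arcLen a x : ℝ) : UnitAddCircle) := by
  have : arcLen a x = L (x - a) := rfl
  rw [this, coe_L]
  abel

lemma mem_openArc_iff {a b x : UnitAddCircle} :
    x ∈ openArc a b ↔ 0 < arcLen a x ∧ arcLen a x < arcLen a b := by
  constructor
  · rintro ⟨t, ht0, htl, rfl⟩
    have htf : Int.fract t = t :=
      Int.fract_eq_self.mpr ⟨le_of_lt ht0, lt_trans htl (arcLen_lt_one a b)⟩
    rw [arcLen_add_coe, htf]
    exact ⟨ht0, htl⟩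
  · rintro ⟨h0, hl⟩
    exact ⟨arcLen a x, h0, hl, eq_add_arcLen a x⟩

lemma arcLen_inj {a x y : UnitAddCircle} (h : arcLen a x = arcLen a y) : x = y := by
  rw [eq_add_arcLen a x, eq_add_arcLen a y, h]

lemma fract_eq_of_int_sub {x v : ℝ} (hv0 : 0 ≤ v) (hv1 : v < 1) (z : ℤ) (h : x - v = z) :
    Int.fract x = v := by
  have : x = v + z := by linarith
  rw [this, Int.fract_add_intCast, Int.fract_eq_self.mpr ⟨hv0, hv1⟩]

lemma arcLen_add_of_lt {a b c : UnitAddCircle} (hab : a ≠ b)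
    (h : arcLen a b < arcLen a c) : arcLen a c = arcLen a b + arcLen b c := by
  have hu : 0 < arcLen a b := arcLen_pos_iff.mpr hab
  have hv : arcLen a c < 1 := arcLen_lt_one a c
  have hbc : arcLen b c = arcLen a c - arcLen a b := by
    rw [arcLen_eq b c]
    refine fract_eq_of_int_sub (by linarith) (by linarith)
      (⌊L c - L a⌋ - ⌊L b - L a⌋) ?_
    rw [arcLen_eq a c, arcLen_eq a b, Int.fract, Int.fract]
    push_cast
    ring
  linarith

lemma arcLen_comp {a b : UnitAddCircle} (h : a ≠ b) : arcLen a b + arcLen b a = 1 := by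
  have h1 : 0 < arcLen a b := arcLen_pos_iff.mpr h
  have hba : arcLen b a = 1 - arcLen a b := by
    rw [arcLen_eq b a]
    refine fract_eq_of_int_sub (by linarith [arcLen_lt_one a b]) (by linarith)
      (-1 - ⌊L b - L a⌋) ?_
    rw [arcLen_eq a b, Int.fract]
    push_cast
    ring
  linarith

lemma smul_coe (n : ℕ) (r : ℝ) :
    n • ((r : ℝ) : UnitAddCircle) = ((n * r : ℝ) : UnitAddCircle) := by
  have := map_nsmul (QuotientAddGroup.mk' (AddSubgroup.zmultiples (1:ℝ))) n r
  have h2 : n • r = (n : ℝ) * r := nsmul_eq_mul n r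
  rw [h2] at this
  exact this.symm

lemma arcLen_smul (n : ℕ) (a b : UnitAddCircle) :
    arcLen (n • a) (n • b) = Int.fract (n * arcLen a b) := by
  conv_lhs => rw [← coe_L a, ← coe_L b]
  rw [smul_coe, smul_coe, arcLen_eq, L_coe, L_coe, arcLen_eq]
  have e1 : Int.fract (Int.fract (↑n * L b) - Int.fract (↑n * L a))
      = Int.fract ((n : ℝ) * L b - n * L a) := by
    rw [Int.fract_eq_fract]
    exact ⟨⌊(n:ℝ) * L a⌋ - ⌊(n:ℝ) * L b⌋, by rw [Int.fract, Int.fract]; push_cast; ring⟩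
  have e2 : Int.fract ((n : ℝ) * Int.fract (L b - L a))
      = Int.fract ((n : ℝ) * L b - n * L a) := by
    rw [Int.fract_eq_fract]
    exact ⟨-(n * ⌊L b - L a⌋), by rw [Int.fract]; push_cast; ring⟩
  rw [e1, e2]

/-- A non-critical arc has its length multiplied by `n`. -/
lemma arcLen_smul_of_lt {n : ℕ} (hn : 0 < n) {p q : UnitAddCircle}
    (h : arcLen p q < 1 / n) : arcLen (n • p) (n • q) = n * arcLen p q := by
  rw [arcLen_smul]
  refine Int.fract_eq_self.mpr ⟨?_, ?_⟩
  · exact mul_nonneg (Nat.cast_nonneg n) (arcLen_nonneg p q)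
  · have hn' : (0:ℝ) < n := by exact_mod_cast hn
    calc (n:ℝ) * arcLen p q < n * (1 / n) := by
          exact mul_lt_mul_of_pos_left h hn'
      _ = 1 := by field_simp

/-- The chain lemma: walking from `x` to `a` through successive complementary
arcs, all of which are non-critical, the map `θ ↦ n • θ` multiplies arc length
from `x` to `a` by `n`. -/
lemma chain_lemma (S : Set UnitAddCircle) (hS : S.Finite) (dd : ℕ) (hdd : 0 < dd)
    (hinj : Set.InjOn (fun θ => dd • θ) S)
    (hcyc : ∀ p ∈ S, ∀ q ∈ S, ∀ r ∈ S, p ≠ q → p ≠ r → q ≠ r →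
      arcLen p q < arcLen p r → arcLen (dd • p) (dd • q) < arcLen (dd • p) (dd • r))
    (a : UnitAddCircle) (ha : a ∈ S)
    (hnc : ∀ p ∈ S, ∀ q ∈ S, p ≠ a → IsComplArc S p q → arcLen p q < 1 / dd) :
    ∀ n : ℕ, ∀ x ∈ S, x ≠ a → (S ∩ {y | arcLen a x < arcLen a y}).ncard = n →
      arcLen (dd • x) (dd • a) = dd * arcLen x a := by
  intro n
  induction n with
  | zero =>
    intro x hx hxa hn
    have hfin : (S ∩ {y | arcLen a x < arcLen a y}).Finite := hS.inter_of_left _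
    have hT : S ∩ {y | arcLen a x < arcLen a y} = ∅ := (Set.ncard_eq_zero hfin).mp hn
    have hax : a ≠ x := Ne.symm hxa
    have hphix : 0 < arcLen a x := arcLen_pos_iff.mpr hax
    have hxa' : arcLen x a = 1 - arcLen a x := by
      have := arcLen_comp hax; linarith
    have hcompl : IsComplArc S x a := by
      refine ⟨hxa, hx, ha, ?_⟩
      rw [Set.eq_empty_iff_forall_notMem]
      rintro z ⟨hzarc, hzS⟩
      rw [mem_openArc_iff] at hzarc
      obtain ⟨hz0, hzl⟩ := hzarc
      have hxz : x ≠ z := arcLen_pos_iff.mp hz0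
      have hza : z ≠ a := fun he => by rw [he] at hzl; exact lt_irrefl _ hzl
      have h1 : ¬ (arcLen a x < arcLen a z) := fun hc =>
        (Set.eq_empty_iff_forall_notMem.mp hT z) ⟨hzS, hc⟩
      have hne : arcLen a z ≠ arcLen a x := fun he => hxz (arcLen_inj he.symm)
      have h2 : arcLen a z < arcLen a x := lt_of_le_of_ne (not_lt.mp h1) hne
      have hz0' : 0 < arcLen a z := arcLen_pos_iff.mpr (Ne.symm hza)
      have hsplit : arcLen a x = arcLen a z + arcLen z x :=
        arcLen_add_of_lt (Ne.symm hza) h2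
      have hcz : arcLen x z + arcLen z x = 1 := arcLen_comp hxz
      rw [hxa'] at hzl
      linarith
    have hlt := hnc x hx a ha hxa hcompl
    exact arcLen_smul_of_lt hdd hlt
  | succ n IH =>
    intro x hx hxa hn
    have hfin : (S ∩ {y | arcLen a x < arcLen a y}).Finite := hS.inter_of_left _
    have hne : (S ∩ {y | arcLen a x < arcLen a y}).Nonempty :=
      Set.nonempty_of_ncard_ne_zero (by rw [hn]; omega)
    obtain ⟨x', hx'T, hmin⟩ := Set.exists_min_image _ (arcLen a) hfin hne
    have hx'S : S ∩ {y | arcLen a x < arcLen a y} ⊆ S := Set.inter_subset_left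
    have hx'Sm : x' ∈ S := hx'T.1
    have hax' : arcLen a x < arcLen a x' := hx'T.2
    have hphix : 0 < arcLen a x := arcLen_pos_iff.mpr (Ne.symm hxa)
    have hphix' : 0 < arcLen a x' := lt_trans hphix hax'
    have hx'a : x' ≠ a := fun he => by
      rw [he] at hphix'
      exact (arcLen_pos_iff.mp hphix') rfl
    have hxx' : x ≠ x' := fun he => by rw [he] at hax'; exact lt_irrefl _ hax'
    have e1 : arcLen a x' = arcLen a x + arcLen x x' :=
      arcLen_add_of_lt (Ne.symm hxa) hax'
    have hcompl : IsComplArc S x x' := by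
      refine ⟨hxx', hx, hx'Sm, ?_⟩
      rw [Set.eq_empty_iff_forall_notMem]
      rintro z ⟨hzarc, hzS⟩
      rw [mem_openArc_iff] at hzarc
      obtain ⟨hz0, hzl⟩ := hzarc
      have hxz : x ≠ z := arcLen_pos_iff.mp hz0
      have hzx' : z ≠ x' := fun he => by rw [he] at hzl; exact lt_irrefl _ hzl
      by_cases hza : z = a
      · subst hza
        have hcz : arcLen x z + arcLen z x = 1 := arcLen_comp hxz
        have := arcLen_comp (a := z) (b := x) (Ne.symm hxz)
        have hlt1 := arcLen_lt_one z x'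
        -- arcLen x z = 1 - arcLen z x = 1 - arcLen a x
        linarith
      · rcases lt_trichotomy (arcLen a z) (arcLen a x) with hc | hc | hc
        · have hz0' : 0 < arcLen a z := arcLen_pos_iff.mpr (Ne.symm hza)
          have hsplit : arcLen a x = arcLen a z + arcLen z x :=
            arcLen_add_of_lt (Ne.symm hza) hc
          have hcz : arcLen x z + arcLen z x = 1 := arcLen_comp hxz
          have := arcLen_lt_one a x'
          linarith
        · exact hxz (arcLen_inj hc.symm)
        · have hsplit : arcLen a z = arcLen a x + arcLen x z :=
            arcLen_add_of_lt (Ne.symm hxa) hc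
          have hmz := hmin z ⟨hzS, hc⟩
          linarith
    have harc1 : arcLen x x' < 1 / dd := hnc x hx x' hx'Sm hxa hcompl
    have himg1 : arcLen (dd • x) (dd • x') = dd * arcLen x x' := arcLen_smul_of_lt hdd harc1
    have hT' : S ∩ {y | arcLen a x' < arcLen a y}
        = (S ∩ {y | arcLen a x < arcLen a y}) \ {x'} := by
      ext z
      constructor
      · rintro ⟨hzS, hz⟩
        simp only [Set.mem_setOf_eq] at hz
        exact ⟨⟨hzS, lt_trans hax' hz⟩, fun he => by
          simp only [Set.mem_singleton_iff] at he
          rw [he] at hz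
          exact lt_irrefl _ hz⟩
      · rintro ⟨⟨hzS, hz⟩, hzx'⟩
        simp only [Set.mem_singleton_iff] at hzx'
        refine ⟨hzS, lt_of_le_of_ne (hmin z ⟨hzS, hz⟩) ?_⟩
        exact fun he => hzx' (arcLen_inj he.symm)
    have hcard' : (S ∩ {y | arcLen a x' < arcLen a y}).ncard = n := by
      rw [hT', Set.ncard_diff_singleton_of_mem hx'T, hn]
      omega
    have hIH := IH x' hx'Sm hx'a hcard'
    have hpc : arcLen x x' < arcLen x a := by
      have h2 := arcLen_comp (a := a) (b := x) (Ne.symm hxa)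
      have := arcLen_lt_one a x'
      linarith
    have himgpc := hcyc x hx x' hx'Sm a ha hxx' hxa hx'a hpc
    have hmux : dd • x ≠ dd • x' := fun he => hxx' (hinj hx hx'Sm he)
    have hadd : arcLen (dd • x) (dd • a)
        = arcLen (dd • x) (dd • x') + arcLen (dd • x') (dd • a) :=
      arcLen_add_of_lt hmux himgpc
    rw [hadd, himg1, hIH]
    have e2 := arcLen_comp (a := a) (b := x) (Ne.symm hxa)
    have e3 := arcLen_comp (a := a) (b := x') (Ne.symm hx'a)
    have key : arcLen x x' + arcLen x' a = arcLen x a := by linarith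
    linear_combination (dd : ℝ) * key


lemma coe_nat_eq_zero (j : ℕ) : (((j : ℝ)) : UnitAddCircle) = 0 := by
  rw [AddCircle.coe_eq_zero_iff]
  exact ⟨(j : ℤ), by simp⟩

/-- If `A m` has exactly one critical complementary arc `I = (a,b)` of length
`ℓ`, then `ℓ > 1 − 1/d_{m+1}`, and for every `y ∉ A (m+1)` the number of
`x ∈ I` with `d_{m+1}·x = y` is `d_{m+1}` if `y ∈ (d_{m+1}·a, d_{m+1}·b)`
and `d_{m+1} − 1` otherwise. -/
theorem unicritical_arc_covering (N : ℕ) (hN : 2 ≤ N) (d : ℕ → ℕ) (hd : ∀ m, 1 ≤ m → 2 ≤ d m)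
    (A : ℕ → Set UnitAddCircle) (hA : IsFormalPortrait N d A) (m : ℕ)
    (a b : UnitAddCircle) (hab : IsComplArc (A m) a b)
    (hcrit : 1 / (d (m + 1) : ℝ) < arcLen a b)
    (huniq : ∀ a' b' : UnitAddCircle, IsComplArc (A m) a' b' →
      1 / (d (m + 1) : ℝ) < arcLen a' b' → a' = a ∧ b' = b) :
    1 - 1 / (d (m + 1) : ℝ) < arcLen a b ∧
    ∀ y : UnitAddCircle, y ∉ A (m + 1) →
      (y ∈ openArc (d (m + 1) • a) (d (m + 1) • b) →
        {x | x ∈ openArc a b ∧ d (m + 1) • x = y}.ncard = d (m + 1)) ∧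
      (y ∉ openArc (d (m + 1) • a) (d (m + 1) • b) →
        {x | x ∈ openArc a b ∧ d (m + 1) • x = y}.ncard = d (m + 1) - 1) := by
  obtain ⟨hfin, hcard, hbij, hcyc'⟩ := hA m
  set dd := d (m + 1) with hdd_def
  have hd2 : 2 ≤ dd := hd (m + 1) (by omega)
  have hdd0 : 0 < dd := by omega
  have hd0R : (0:ℝ) < dd := by exact_mod_cast hdd0
  have hd2R : (2:ℝ) ≤ dd := by exact_mod_cast hd2
  obtain ⟨hne_ab, haS, hbS, harcem⟩ := hab
  -- every complementary arc not starting at a is non-critical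
  have hnc : ∀ p ∈ A m, ∀ q ∈ A m, p ≠ a → IsComplArc (A m) p q →
      arcLen p q < 1 / dd := by
    intro p hp q hq hpa hc
    have hle : ¬ (1 / (dd:ℝ) < arcLen p q) := fun hgt => hpa (huniq p q hc hgt).1
    rcases lt_or_eq_of_le (not_lt.mp hle) with h | h
    · exact h
    · exfalso
      have hz : arcLen (dd • p) (dd • q) = 0 := by
        rw [arcLen_smul, h]
        have he1 : (dd:ℝ) * (1 / dd) = 1 := by field_simp
        rw [he1]
        simp
      exact hc.1 (hbij.injOn hp hq (arcLen_eq_zero_iff.mp hz))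
  have hcyc : ∀ p ∈ A m, ∀ q ∈ A m, ∀ r ∈ A m, p ≠ q → p ≠ r → q ≠ r →
      arcLen p q < arcLen p r →
        arcLen (dd • p) (dd • q) < arcLen (dd • p) (dd • r) :=
    fun p hp q hq r hr h1 h2 h3 h4 => hcyc' p hp q hq r hr h1 h2 h3 h4
  have hchain := chain_lemma (A m) hfin dd hdd0 hbij.injOn hcyc a haS hnc
    ((A m ∩ {y | arcLen a b < arcLen a y}).ncard) b hbS (Ne.symm hne_ab) rfl
  have hcomp := arcLen_comp hne_ab
  have hlt1 := arcLen_lt_one (dd • b) (dd • a)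
  rw [hchain] at hlt1
  have part1 : 1 - 1 / (dd:ℝ) < arcLen a b := by
    have h1 : 1 - arcLen a b < 1 / dd := (lt_div_iff₀ hd0R).mpr (by nlinarith)
    linarith
  refine ⟨part1, ?_⟩
  intro y hy
  set ℓ := arcLen a b with hl_def
  have hl1 : ℓ < 1 := arcLen_lt_one a b
  have hl0 : 0 < ℓ := arcLen_pos_iff.mpr hne_ab
  have hl_lo : (dd:ℝ) - 1 < dd * ℓ := by nlinarith
  have hl_hi : (dd:ℝ) * ℓ < dd := by nlinarith
  have himg_ab : arcLen (dd • a) (dd • b) = dd * ℓ - (dd - 1) := by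
    rw [arcLen_smul]
    exact fract_eq_of_int_sub (by linarith) (by linarith) ((dd:ℤ) - 1) (by push_cast; ring)
  have hmapsA : dd • a ∈ A (m + 1) := hbij.mapsTo haS
  have hya : y ≠ dd • a := fun he => hy (he ▸ hmapsA)
  set s := arcLen (dd • a) y with hs_def
  have hs0 : 0 < s := arcLen_pos_iff.mpr (Ne.symm hya)
  have hs1 : s < 1 := arcLen_lt_one _ _
  have hyeq : y = dd • a + ((s:ℝ) : UnitAddCircle) := eq_add_arcLen _ _
  set f : ℕ → UnitAddCircle := fun j => a + ((((s + j) / dd : ℝ)) : UnitAddCircle) with hf_def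
  set J : Set ℕ := {j : ℕ | j < dd ∧ ((s + j) / dd : ℝ) < ℓ} with hJ_def
  have hXeq : {x | x ∈ openArc a b ∧ dd • x = y} = f '' J := by
    ext x
    constructor
    · rintro ⟨hxarc, hxy⟩
      obtain ⟨t, ht0, htl, rfl⟩ := hxarc
      have ht1 : t < 1 := lt_trans htl hl1
      have hsm : dd • (a + ((t:ℝ) : UnitAddCircle))
          = dd • a + (((dd * t : ℝ)) : UnitAddCircle) := by
        rw [smul_add, smul_coe]
      have hfr : Int.fract ((dd:ℝ) * t) = s := by
        rw [hs_def, ← hxy, hsm, arcLen_add_coe]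
      have hdt0 : 0 < (dd:ℝ) * t := by positivity
      have hfl0 : 0 ≤ ⌊(dd:ℝ) * t⌋ := Int.floor_nonneg.mpr (le_of_lt hdt0)
      set j : ℕ := ⌊(dd:ℝ) * t⌋.toNat with hj_def
      have hjcast : (j:ℝ) = (⌊(dd:ℝ) * t⌋ : ℝ) := by
        rw [hj_def]
        exact_mod_cast congrArg (fun z : ℤ => (z:ℝ)) (Int.toNat_of_nonneg hfl0)
      have ht_eq : t = (s + j) / dd := by
        have hfr' : (dd:ℝ) * t - (⌊(dd:ℝ) * t⌋ : ℝ) = s := hfr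
        rw [eq_div_iff (ne_of_gt hd0R)]
        rw [hjcast]
        linarith
      have hjd : j < dd := by
        have h1 : s + (j:ℝ) = dd * t := by
          rw [ht_eq]; field_simp
        have : (j:ℝ) < dd := by nlinarith
        exact_mod_cast this
      exact ⟨j, ⟨hjd, by rw [← ht_eq]; exact htl⟩, by rw [hf_def]; simp only; rw [← ht_eq]⟩
    · rintro ⟨j, ⟨hjd, hjl⟩, rfl⟩
      have hjR : (0:ℝ) ≤ j := Nat.cast_nonneg j
      have ht0 : 0 < (s + j) / dd := div_pos (by linarith) hd0R
      refine ⟨⟨(s + j) / dd, ht0, hjl, rfl⟩, ?_⟩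
      show dd • (a + ((((s + j) / dd : ℝ)) : UnitAddCircle)) = y
      rw [smul_add, smul_coe]
      have he1 : (dd:ℝ) * ((s + j) / dd) = s + j := by field_simp
      rw [he1]
      have he2 : (((s + j : ℝ)) : UnitAddCircle) = ((s : ℝ) : UnitAddCircle) := by
        have : ((s + j : ℝ) : UnitAddCircle)
            = ((s : ℝ) : UnitAddCircle) + (((j : ℝ)) : UnitAddCircle) := by norm_cast
        rw [this, coe_nat_eq_zero, add_zero]
      rw [he2, ← hyeq]
  have hinjJ : Set.InjOn f J := by
    intro j hj k hk he
    rw [hJ_def] at hj hk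
    have hjt : (s + (j:ℝ)) / dd < 1 := lt_trans hj.2 hl1
    have hkt : (s + (k:ℝ)) / dd < 1 := lt_trans hk.2 hl1
    have hjR : (0:ℝ) ≤ j := Nat.cast_nonneg j
    have hkR : (0:ℝ) ≤ k := Nat.cast_nonneg k
    have hj0 : 0 ≤ (s + (j:ℝ)) / dd := le_of_lt (div_pos (by linarith) hd0R)
    have hk0 : 0 ≤ (s + (k:ℝ)) / dd := le_of_lt (div_pos (by linarith) hd0R)
    have h1 : ((((s + j) / dd : ℝ)) : UnitAddCircle) = (((s + k) / dd : ℝ) : UnitAddCircle) :=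
      add_left_cancel he
    have h2 : Int.fract ((s + (j:ℝ)) / dd) = Int.fract ((s + (k:ℝ)) / dd) := by
      rw [← L_coe, ← L_coe, h1]
    rw [Int.fract_eq_self.mpr ⟨hj0, hjt⟩, Int.fract_eq_self.mpr ⟨hk0, hkt⟩] at h2
    field_simp at h2
    exact_mod_cast add_left_cancel h2
  have hXcard : {x | x ∈ openArc a b ∧ dd • x = y}.ncard = J.ncard := by
    rw [hXeq, Set.ncard_image_of_injOn hinjJ]
  constructor
  · intro hmem
    rw [mem_openArc_iff, himg_ab] at hmem
    obtain ⟨-, hslt0⟩ := hmem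
    have hslt : s < (dd:ℝ) * ℓ - ((dd:ℝ) - 1) := hslt0
    have hJall : J = Set.Iio dd := by
      ext j
      simp only [hJ_def, Set.mem_setOf_eq, Set.mem_Iio]
      constructor
      · exact fun h => h.1
      · intro hjd
        refine ⟨hjd, ?_⟩
        have hjR : (j:ℝ) ≤ (dd:ℝ) - 1 := by
          have : (j:ℝ) + 1 ≤ dd := by exact_mod_cast Nat.succ_le_of_lt hjd
          linarith
        rw [div_lt_iff₀ hd0R]
        rw [mul_comm]
        linarith
    rw [hXcard, hJall, ← Finset.coe_range, Set.ncard_coe_finset, Finset.card_range]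
  · intro hmem
    rw [mem_openArc_iff, himg_ab] at hmem
    push_neg at hmem
    have hsge : (dd:ℝ) * ℓ - ((dd:ℝ) - 1) ≤ s := hmem hs0
    have hJsm : J = Set.Iio (dd - 1) := by
      ext j
      simp only [hJ_def, Set.mem_setOf_eq, Set.mem_Iio]
      constructor
      · rintro ⟨hjd, hjl⟩
        rw [div_lt_iff₀ hd0R, mul_comm] at hjl
        have : (j:ℝ) < (dd:ℝ) - 1 := by linarith
        have h2 : (j:ℝ) < ((dd - 1 : ℕ) : ℝ) := by
          rwa [Nat.cast_sub (by omega), Nat.cast_one]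
        exact_mod_cast h2
      · intro hjd
        have hjd' : j < dd := by omega
        refine ⟨hjd', ?_⟩
        have hjR : (j:ℝ) ≤ (dd:ℝ) - 2 := by
          have : (j:ℝ) + 1 ≤ ((dd - 1 : ℕ) : ℝ) := by exact_mod_cast Nat.succ_le_of_lt hjd
          rw [Nat.cast_sub (by omega), Nat.cast_one] at this
          linarith
        rw [div_lt_iff₀ hd0R, mul_comm]
        linarith
    rw [hXcard, hJsm, ← Finset.coe_range, Set.ncard_coe_finset, Finset.card_range]
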